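/- Under the standard embedding into M₂(ℂ), the units u = i_K + (−i_K)j + k and w = i_K + i_K j + k of the quaternion algebra over ℚ(√(−1)) map (up to scalar) to matrices inducing the Möbius transformations z ↦ z/(2z+1) and z ↦ z + 2 respectively (after conjugation/normalization as in the paper); consequently ⟨u, w⟩ contains a free group of rank 2, hence the unit group of the order (−1,−1/ℤ[i]) contains a free group of rank 2. -/

import Mathlib

open Quaternion Complex Matrix
open Pointwise

/-- The embedding `Ψ(u₁ + u_i i + (u_j + u_k i)j) =
[[u₁ + u_i√(-1), u_j + u_k√(-1)], [-u_j + u_k√(-1), u₁ - u_i√(-1)]]` of the quaternion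
algebra over `ℚ(√(-1))` (inside `ℍ[ℂ]`) into `M₂(ℂ)`. -/
def gaussianPsi (q : ℍ[ℂ]) : Matrix (Fin 2) (Fin 2) ℂ :=
  !![q.re + q.imI * Complex.I, q.imJ + q.imK * Complex.I;
     -q.imJ + q.imK * Complex.I, q.re - q.imI * Complex.I]

lemma gaussianPsi_one : gaussianPsi 1 = 1 := by
  ext i j; fin_cases i <;> fin_cases j <;> simp [gaussianPsi]

lemma gaussianPsi_mul (p q : ℍ[ℂ]) : gaussianPsi (p * q) = gaussianPsi p * gaussianPsi q := by
  ext i j; fin_cases i <;> fin_cases j <;>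
    simp [gaussianPsi, Matrix.mul_apply, Fin.sum_univ_two, Quaternion.re_mul,
      Quaternion.imI_mul, Quaternion.imJ_mul, Quaternion.imK_mul] <;> ring_nf <;>
    simp [Complex.I_sq] <;> ring

def ppU : ℍ[ℂ]ˣ where
  val := ⟨Complex.I, 0, -Complex.I, 1⟩
  inv := ⟨-Complex.I, 0, -Complex.I, 1⟩
  val_inv := by
    show (⟨Complex.I, 0, -Complex.I, 1⟩ : ℍ[ℂ]) * ⟨-Complex.I, 0, -Complex.I, 1⟩ = 1
    ext <;> simp [Quaternion.re_mul, Quaternion.imI_mul, Quaternion.imJ_mul, Quaternion.imK_mul]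
  inv_val := by
    show (⟨-Complex.I, 0, -Complex.I, 1⟩ : ℍ[ℂ]) * ⟨Complex.I, 0, -Complex.I, 1⟩ = 1
    ext <;> simp [Quaternion.re_mul, Quaternion.imI_mul, Quaternion.imJ_mul, Quaternion.imK_mul]

def ppW : ℍ[ℂ]ˣ where
  val := ⟨Complex.I, 0, Complex.I, 1⟩
  inv := ⟨-Complex.I, 0, Complex.I, 1⟩
  val_inv := by
    show (⟨Complex.I, 0, Complex.I, 1⟩ : ℍ[ℂ]) * ⟨-Complex.I, 0, Complex.I, 1⟩ = 1
    ext <;> simp [Quaternion.re_mul, Quaternion.imI_mul, Quaternion.imJ_mul, Quaternion.imK_mul]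
  inv_val := by
    show (⟨-Complex.I, 0, Complex.I, 1⟩ : ℍ[ℂ]) * ⟨Complex.I, 0, Complex.I, 1⟩ = 1
    ext <;> simp [Quaternion.re_mul, Quaternion.imI_mul, Quaternion.imJ_mul, Quaternion.imK_mul]

lemma psiU : gaussianPsi (ppU : ℍ[ℂ]) = !![Complex.I, 0; 2*Complex.I, Complex.I] := by
  ext i j; fin_cases i <;> fin_cases j <;> simp [gaussianPsi, ppU] <;> ring

lemma psiUinv : gaussianPsi ((ppU⁻¹ : ℍ[ℂ]ˣ) : ℍ[ℂ])
    = !![-Complex.I, 0; 2*Complex.I, -Complex.I] := by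
  show gaussianPsi ⟨-Complex.I, 0, -Complex.I, 1⟩ = _
  ext i j; fin_cases i <;> fin_cases j <;> simp [gaussianPsi, ppU] <;> ring

lemma psiW : gaussianPsi (ppW : ℍ[ℂ]) = !![Complex.I, 2*Complex.I; 0, Complex.I] := by
  ext i j; fin_cases i <;> fin_cases j <;> simp [gaussianPsi, ppW] <;> ring

lemma psiWinv : gaussianPsi ((ppW⁻¹ : ℍ[ℂ]ˣ) : ℍ[ℂ])
    = !![-Complex.I, 2*Complex.I; 0, -Complex.I] := by
  show gaussianPsi ⟨-Complex.I, 0, Complex.I, 1⟩ = _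
  ext i j; fin_cases i <;> fin_cases j <;> simp [gaussianPsi, ppW] <;> ring

/-- Nonzero vectors in `ℂ²`: the ping-pong board. -/
def PPBoard : Type := {v : Fin 2 → ℂ // v ≠ 0}

lemma gaussianPsi_mulVec_ne_zero (g : ℍ[ℂ]ˣ) (v : Fin 2 → ℂ) (hv : v ≠ 0) :
    gaussianPsi (g : ℍ[ℂ]) *ᵥ v ≠ 0 := by
  intro h
  apply hv
  have : gaussianPsi ((g⁻¹ : ℍ[ℂ]ˣ) : ℍ[ℂ]) *ᵥ (gaussianPsi (g : ℍ[ℂ]) *ᵥ v) = v := by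
    rw [Matrix.mulVec_mulVec, ← gaussianPsi_mul]
    simp [gaussianPsi_one]
  rw [h, Matrix.mulVec_zero] at this
  exact this.symm

noncomputable instance : MulAction ℍ[ℂ]ˣ PPBoard where
  smul g v := ⟨gaussianPsi (g : ℍ[ℂ]) *ᵥ v.1, gaussianPsi_mulVec_ne_zero g v.1 v.2⟩
  one_smul v := Subtype.ext (by show gaussianPsi _ *ᵥ _ = _; simp [gaussianPsi_one])
  mul_smul g h v := Subtype.ext (by
    show gaussianPsi _ *ᵥ _ = gaussianPsi _ *ᵥ (gaussianPsi _ *ᵥ _)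
    rw [Matrix.mulVec_mulVec, ← gaussianPsi_mul]; rfl)

lemma pp_smul_coe (g : ℍ[ℂ]ˣ) (v : PPBoard) :
    (g • v).1 = gaussianPsi (g : ℍ[ℂ]) *ᵥ v.1 := rfl

/-- The quantity `Re(x ȳ)` defining the ping-pong sets. -/
def ppR (v : PPBoard) : ℝ := (v.1 0 * (starRingEnd ℂ) (v.1 1)).re

lemma ppR_le (v : PPBoard) : |ppR v| ≤ ‖(v.1 0)‖ * ‖(v.1 1)‖ :=
  le_trans (Complex.abs_re_le_norm _) (by simp [_root_.map_mul])

lemma ppR_zero_left (v : PPBoard) (h : v.1 0 = 0) : ppR v = 0 := by simp [ppR, h]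
lemma ppR_zero_right (v : PPBoard) (h : v.1 1 = 0) : ppR v = 0 := by simp [ppR, h]

lemma pp_core {x y : ℂ} {r : ℝ} (h1 : Complex.normSq y ≤ r) (h2 : Complex.normSq x < r)
    (hr : |r| ≤ ‖x‖ * ‖y‖) : False := by
  have hax : ‖x‖ ^ 2 = Complex.normSq x := Complex.sq_norm x
  have hay : ‖y‖ ^ 2 = Complex.normSq y := Complex.sq_norm y
  nlinarith [Complex.normSq_nonneg x, Complex.normSq_nonneg y, le_abs_self r, abs_nonneg r,
    norm_nonneg x, norm_nonneg y, sq_nonneg (‖x‖ * ‖y‖ - r)]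

/-- Attracting sets: index `true` ↦ `ppU`, `false` ↦ `ppW`. -/
def ppX : Bool → Set PPBoard
  | true => {v | v.1 0 = 0 ∨ Complex.normSq (v.1 0) ≤ ppR v}
  | false => {v | v.1 1 = 0 ∨ Complex.normSq (v.1 1) < ppR v}

/-- Repelling sets. -/
def ppY : Bool → Set PPBoard
  | true => {v | v.1 0 ≠ 0 ∧ ppR v < -Complex.normSq (v.1 0)}
  | false => {v | v.1 1 ≠ 0 ∧ ppR v ≤ -Complex.normSq (v.1 1)}

lemma pp_ne_both (v : PPBoard) (h0 : v.1 0 = 0) (h1 : v.1 1 = 0) : False := by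
  apply v.2; funext i; fin_cases i <;> simpa using ‹_›

lemma ppXX (v : PPBoard) (ht : v ∈ ppX true) (hf : v ∈ ppX false) : False := by
  simp only [ppX, Set.mem_setOf_eq] at ht hf
  rcases ht with h | h <;> rcases hf with h' | h'
  · exact pp_ne_both v h h'
  · rw [ppR_zero_left v h] at h'; exact absurd h' (by simpa using Complex.normSq_nonneg _)
  · rw [ppR_zero_right v h'] at h
    exact pp_ne_both v (Complex.normSq_eq_zero.mp (le_antisymm h (Complex.normSq_nonneg _))) h'
  · exact pp_core (x := v.1 1) (y := v.1 0) h h' (by rw [mul_comm]; exact ppR_le v)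

lemma ppYY (v : PPBoard) (ht : v ∈ ppY true) (hf : v ∈ ppY false) : False := by
  simp only [ppY, Set.mem_setOf_eq] at ht hf
  refine pp_core (x := v.1 0) (y := v.1 1) (r := -ppR v)
    (by linarith [hf.2]) (by linarith [ht.2]) ?_
  rw [abs_neg]; exact ppR_le v

lemma ppXY_tt (v : PPBoard) (h : v ∈ ppX true) (h' : v ∈ ppY true) : False := by
  simp only [ppX, ppY, Set.mem_setOf_eq] at h h'
  rcases h with h | h
  · exact h'.1 h
  · have := Complex.normSq_pos.mpr h'.1; linarith [h'.2]

lemma ppXY_ff (v : PPBoard) (h : v ∈ ppX false) (h' : v ∈ ppY false) : False := by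
  simp only [ppX, ppY, Set.mem_setOf_eq] at h h'
  rcases h with h | h
  · exact h'.1 h
  · have := Complex.normSq_pos.mpr h'.1; linarith [h'.2]

lemma ppXY_tf (v : PPBoard) (h : v ∈ ppX true) (h' : v ∈ ppY false) : False := by
  simp only [ppX, ppY, Set.mem_setOf_eq] at h h'
  have hy := Complex.normSq_pos.mpr h'.1
  rcases h with h | h
  · rw [ppR_zero_left v h] at h'; linarith [h'.2]
  · have := Complex.normSq_nonneg (v.1 0); linarith [h'.2]

lemma ppXY_ft (v : PPBoard) (h : v ∈ ppX false) (h' : v ∈ ppY true) : False := by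
  simp only [ppX, ppY, Set.mem_setOf_eq] at h h'
  have hx := Complex.normSq_pos.mpr h'.1
  rcases h with h | h
  · rw [ppR_zero_right v h] at h'; linarith [h'.2]
  · have := Complex.normSq_nonneg (v.1 1); linarith [h'.2]

lemma ppU_X : ppU • (ppY true)ᶜ ⊆ ppX true := by
  rintro p hp
  rw [Set.mem_smul_set] at hp
  obtain ⟨v, hv, rfl⟩ := hp
  simp only [ppY, Set.mem_compl_iff, Set.mem_setOf_eq, not_and, not_lt] at hv
  simp only [ppX, Set.mem_setOf_eq]
  have hc0 : (ppU • v).1 0 = Complex.I * v.1 0 := by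
    rw [pp_smul_coe, psiU]; simp [Matrix.mulVec, dotProduct, Fin.sum_univ_two]
  by_cases hx : v.1 0 = 0
  · left; rw [hc0, hx, mul_zero]
  · right
    have h1 : Complex.normSq ((ppU • v).1 0) = Complex.normSq (v.1 0) := by rw [hc0]; simp
    have h2 : ppR (ppU • v) = 2 * Complex.normSq (v.1 0) + ppR v := by
      rw [ppR, pp_smul_coe, psiU]
      simp [ppR, Matrix.mulVec, dotProduct, Fin.sum_univ_two, Complex.mul_re,
        Complex.mul_im, Complex.normSq_apply]
      ring
    rw [h1, h2]
    linarith [hv hx]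

lemma ppW_X : ppW • (ppY false)ᶜ ⊆ ppX false := by
  rintro p hp
  rw [Set.mem_smul_set] at hp
  obtain ⟨v, hv, rfl⟩ := hp
  simp only [ppY, Set.mem_compl_iff, Set.mem_setOf_eq, not_and, not_le] at hv
  simp only [ppX, Set.mem_setOf_eq]
  have hc1 : (ppW • v).1 1 = Complex.I * v.1 1 := by
    rw [pp_smul_coe, psiW]; simp [Matrix.mulVec, dotProduct, Fin.sum_univ_two]
  by_cases hy : v.1 1 = 0
  · left; rw [hc1, hy, mul_zero]
  · right
    have h1 : Complex.normSq ((ppW • v).1 1) = Complex.normSq (v.1 1) := by rw [hc1]; simp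
    have h2 : ppR (ppW • v) = 2 * Complex.normSq (v.1 1) + ppR v := by
      rw [ppR, pp_smul_coe, psiW]
      simp [ppR, Matrix.mulVec, dotProduct, Fin.sum_univ_two, Complex.mul_re,
        Complex.mul_im, Complex.normSq_apply]
      ring
    rw [h1, h2]
    linarith [hv hy]

lemma ppU_Y : ppU⁻¹ • (ppX true)ᶜ ⊆ ppY true := by
  rintro p hp
  rw [Set.mem_smul_set] at hp
  obtain ⟨v, hv, rfl⟩ := hp
  simp only [ppX, Set.mem_compl_iff, Set.mem_setOf_eq, not_or, not_le] at hv
  simp only [ppY, Set.mem_setOf_eq]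
  have hc0 : (ppU⁻¹ • v).1 0 = -Complex.I * v.1 0 := by
    rw [pp_smul_coe, psiUinv]; simp [Matrix.mulVec, dotProduct, Fin.sum_univ_two]
  constructor
  · rw [hc0]; exact mul_ne_zero (by simp [Complex.I_ne_zero]) hv.1
  · have h1 : Complex.normSq ((ppU⁻¹ • v).1 0) = Complex.normSq (v.1 0) := by rw [hc0]; simp
    have h2 : ppR (ppU⁻¹ • v) = ppR v - 2 * Complex.normSq (v.1 0) := by
      rw [ppR, pp_smul_coe, psiUinv]
      simp [ppR, Matrix.mulVec, dotProduct, Fin.sum_univ_two, Complex.mul_re,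
        Complex.mul_im, Complex.normSq_apply]
      ring
    rw [h1, h2]
    linarith [hv.2]

lemma ppW_Y : ppW⁻¹ • (ppX false)ᶜ ⊆ ppY false := by
  rintro p hp
  rw [Set.mem_smul_set] at hp
  obtain ⟨v, hv, rfl⟩ := hp
  simp only [ppX, Set.mem_compl_iff, Set.mem_setOf_eq, not_or, not_lt] at hv
  simp only [ppY, Set.mem_setOf_eq]
  have hc1 : (ppW⁻¹ • v).1 1 = -Complex.I * v.1 1 := by
    rw [pp_smul_coe, psiWinv]; simp [Matrix.mulVec, dotProduct, Fin.sum_univ_two]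
  constructor
  · rw [hc1]; exact mul_ne_zero (by simp [Complex.I_ne_zero]) hv.1
  · have h1 : Complex.normSq ((ppW⁻¹ • v).1 1) = Complex.normSq (v.1 1) := by rw [hc1]; simp
    have h2 : ppR (ppW⁻¹ • v) = ppR v - 2 * Complex.normSq (v.1 1) := by
      rw [ppR, pp_smul_coe, psiWinv]
      simp [ppR, Matrix.mulVec, dotProduct, Fin.sum_univ_two, Complex.mul_re,
        Complex.mul_im, Complex.normSq_apply]
      ring
    rw [h1, h2]
    linarith [hv.2]

lemma pp_free : Function.Injective ⇑(FreeGroup.lift (fun b : Bool => if b then ppU else ppW)) := by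
  apply FreeGroup.injective_lift_of_ping_pong _ ppX ppY
  · intro i; cases i
    · refine ⟨⟨![1, 0], fun h => one_ne_zero (α := ℂ) ?_⟩, ?_⟩
      · simpa using congrFun h 0
      · simp only [ppX, Set.mem_setOf_eq]; left; rfl
    · refine ⟨⟨![0, 1], fun h => one_ne_zero (α := ℂ) ?_⟩, ?_⟩
      · simpa using congrFun h 1
      · simp only [ppX, Set.mem_setOf_eq]; left; rfl
  · intro i j hij
    cases i <;> cases j
    · exact absurd rfl hij
    · exact Set.disjoint_left.mpr fun v hv hv' => (ppXX v hv' hv).elim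
    · exact Set.disjoint_left.mpr fun v hv hv' => (ppXX v hv hv').elim
    · exact absurd rfl hij
  · intro i j hij
    cases i <;> cases j
    · exact absurd rfl hij
    · exact Set.disjoint_left.mpr fun v hv hv' => (ppYY v hv' hv).elim
    · exact Set.disjoint_left.mpr fun v hv hv' => (ppYY v hv hv').elim
    · exact absurd rfl hij
  · intro i j
    cases i <;> cases j
    · exact Set.disjoint_left.mpr fun v hv hv' => (ppXY_ff v hv hv').elim
    · exact Set.disjoint_left.mpr fun v hv hv' => (ppXY_ft v hv hv').elim
    · exact Set.disjoint_left.mpr fun v hv hv' => (ppXY_tf v hv hv').elim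
    · exact Set.disjoint_left.mpr fun v hv hv' => (ppXY_tt v hv hv').elim
  · intro i; cases i
    · exact ppW_X
    · exact ppU_X
  · intro i; cases i
    · exact ppW_Y
    · exact ppU_Y

/-- The units `u = i_K - i_K·j + k` and `w = i_K + i_K·j + k` of the quaternion algebra
over `ℚ(√(-1))` map under `Ψ` to `√(-1)·[[1,0],[2,1]]` and `√(-1)·[[1,2],[0,1]]`, which
induce the Möbius transformations `z ↦ z/(2z+1)` and `z ↦ z+2`; consequently `u, w`
are units generating a free group of rank 2, so the unit group of the order
`(-1,-1/ℤ[i])` contains a free group of rank 2. -/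
theorem gaussian_units_free_group :
    let u : ℍ[ℂ] := ⟨Complex.I, 0, -Complex.I, 1⟩
    let w : ℍ[ℂ] := ⟨Complex.I, 0, Complex.I, 1⟩
    gaussianPsi u = Complex.I • !![1, 0; 2, 1] ∧
    gaussianPsi w = Complex.I • !![1, 2; 0, 1] ∧
    ∃ U W : ℍ[ℂ]ˣ, (U : ℍ[ℂ]) = u ∧ (W : ℍ[ℂ]) = w ∧
      Function.Injective ⇑(FreeGroup.lift (fun b : Bool => if b then U else W)) := by
  intro u w
  refine ⟨?_, ?_, ppU, ppW, rfl, rfl, pp_free⟩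
  · ext i j; fin_cases i <;> fin_cases j <;> simp [gaussianPsi, u] <;> ring
  · ext i j; fin_cases i <;> fin_cases j <;> simp [gaussianPsi, w] <;> ring
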